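/- Let X be an extremally disconnected regular Hausdorff space, Y a metrizable space, and φ : X → Set Y a compact-valued continuous set-valued mapping (i.e. both lower and upper semicontinuous with all values nonempty and compact). Then for each dense subset A ⊆ X, each continuous selection for the restriction φ↾A can be extended to a continuous selection for φ. -/

import Mathlib

open Filter Set Topology

/-- If a proper filter contains every open neighborhood of a compact set `K`,
then it has a cluster point in `K`. -/
lemma clusterPt_of_absorbing {Y : Type*} [TopologicalSpace Y] {K : Set Y}
    (hK : IsCompact K) (G : Filter Y) [hGne : G.NeBot]
    (h : ∀ U : Set Y, IsOpen U → K ⊆ U → U ∈ G) :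
    ∃ y ∈ K, ClusterPt y G := by
  by_contra hc
  push_neg at hc
  have key : ∀ y ∈ K, ∃ V : Set Y, IsOpen V ∧ y ∈ V ∧ ∃ S ∈ G, V ∩ S = ∅ := by
    intro y hy
    have := hc y hy
    rw [clusterPt_iff_nonempty] at this
    push_neg at this
    obtain ⟨U, hU, S, hS, hUS⟩ := this
    obtain ⟨V, hVU, hVo, hyV⟩ := mem_nhds_iff.1 hU
    refine ⟨V, hVo, hyV, S, hS, ?_⟩
    exact Set.eq_empty_of_subset_empty (hUS ▸ Set.inter_subset_inter_left S hVU)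
  choose V hVo hyV S hSG hVS using key
  obtain ⟨t, ht⟩ := hK.elim_nhds_subcover' (fun y hy => V y hy)
    (fun y hy => (hVo y hy).mem_nhds (hyV y hy))
  have hU : (⋃ y ∈ t, V y y.2) ∈ G := by
    refine h _ (isOpen_biUnion fun y _ => hVo y y.2) ht
  have hS : (⋂ y ∈ t, S y y.2) ∈ G := (biInter_mem t.finite_toSet).2 fun y _ => hSG y y.2
  have : (⋃ y ∈ t, V y y.2) ∩ (⋂ y ∈ t, S y y.2) = ∅ := by
    ext z
    simp only [Set.mem_inter_iff, Set.mem_iUnion, Set.mem_iInter, Set.mem_empty_iff_false,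
      iff_false, not_and]
    rintro ⟨y, hy, hzV⟩ hzS
    have : z ∈ V y y.2 ∩ S y y.2 := ⟨hzV, hzS y hy⟩
    rw [hVS y y.2] at this
    exact this
  have : (∅ : Set Y) ∈ G := this ▸ inter_mem hU hS
  exact hGne.ne (empty_mem_iff_bot.1 this)

/-- Extension of densely defined continuous selections for compact-valued
continuous mappings into metrizable spaces, on extremally disconnected regular
Hausdorff domains. -/
theorem selection_extension_of_extremallyDisconnected_metrizable
    {X Y : Type*} [TopologicalSpace X] [T2Space X] [RegularSpace X]
    [ExtremallyDisconnected X]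
    [TopologicalSpace Y] [T2Space Y] [TopologicalSpace.MetrizableSpace Y]
    (φ : X → Set Y)
    (hne : ∀ x, (φ x).Nonempty)
    (hcomp : ∀ x, IsCompact (φ x))
    (husc : ∀ U : Set Y, IsOpen U → IsOpen {x | φ x ⊆ U})
    (hlsc : ∀ U : Set Y, IsOpen U → IsOpen {x | (φ x ∩ U).Nonempty})
    (A : Set X) (hA : Dense A)
    (g : A → Y) (hg : Continuous g) (hgsel : ∀ a : A, g a ∈ φ a) :
    ∃ f : X → Y, Continuous f ∧ (∀ x, f x ∈ φ x) ∧ ∀ a : A, f a = g a := by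
  haveI : T3Space Y := by
    letI := TopologicalSpace.metrizableSpaceMetric Y
    infer_instance
  -- the inclusion of A is dense inducing
  have di : IsDenseInducing ((↑) : A → X) :=
    ⟨Topology.IsInducing.subtypeVal, hA.denseRange_val⟩
  -- the trace filter at any point is proper
  have hFne : ∀ x : X, (Filter.comap ((↑) : A → X) (𝓝 x)).NeBot :=
    fun x => di.comap_nhds_neBot x
  -- the pushforward filter of g along the trace filter at x
  set G : X → Filter Y := fun x => Filter.map g (Filter.comap ((↑) : A → X) (𝓝 x)) with hG
  have hGne : ∀ x, (G x).NeBot := fun x => (hFne x).map g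
  -- absorption: G x contains every open neighborhood of φ x
  have habs : ∀ x, ∀ U : Set Y, IsOpen U → φ x ⊆ U → U ∈ G x := by
    intro x U hUo hUsub
    have hN : {z | φ z ⊆ U} ∈ 𝓝 x := (husc U hUo).mem_nhds hUsub
    rw [Filter.mem_map]
    have : ((↑) : A → X) ⁻¹' {z | φ z ⊆ U} ∈ Filter.comap ((↑) : A → X) (𝓝 x) :=
      Filter.preimage_mem_comap hN
    filter_upwards [this] with a ha
    exact ha (hgsel a)
  -- uniqueness of cluster points, via extremal disconnectedness
  have huniq : ∀ x, ∀ y₁ y₂, ClusterPt y₁ (G x) → ClusterPt y₂ (G x) → y₁ = y₂ := by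
    intro x y₁ y₂ h₁ h₂
    by_contra hne'
    obtain ⟨V₁, V₂, hV₁o, hV₂o, hy₁, hy₂, hVd⟩ := t2_separation hne'
    -- g ⁻¹' Vᵢ is open in A, so equals Oᵢ ∩ A for some open Oᵢ ⊆ X
    obtain ⟨O₁, hO₁o, hO₁⟩ := isOpen_induced_iff.1 (hV₁o.preimage hg)
    obtain ⟨O₂, hO₂o, hO₂⟩ := isOpen_induced_iff.1 (hV₂o.preimage hg)
    -- O₁ ∩ O₂ misses A, hence is empty
    have hO12 : O₁ ∩ O₂ = ∅ := by
      by_contra hne''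
      obtain ⟨z, hz⟩ := hA.inter_open_nonempty _ (hO₁o.inter hO₂o)
        (Set.nonempty_iff_ne_empty.2 hne'')
      have ha : (⟨z, hz.2⟩ : A) ∈ (Subtype.val ⁻¹' O₁ ∩ Subtype.val ⁻¹' O₂ : Set A) :=
        ⟨hz.1.1, hz.1.2⟩
      rw [hO₁, hO₂] at ha
      exact (Set.disjoint_iff.1 hVd) ⟨ha.1, ha.2⟩
    -- disjoint open sets have disjoint closures in an ED space
    have hclosed : closure O₁ ∩ closure O₂ = ∅ := by
      have hcl₁ : IsOpen (closure O₁) := ExtremallyDisconnected.open_closure O₁ hO₁o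
      have h1 : O₂ ⊆ (closure O₁)ᶜ := by
        intro z hz hz'
        -- closure O₁ is open, z in it and in O₂ open, so O₂ ∩ closure O₁ open nonempty meets O₁
        have : z ∈ closure O₁ ∩ O₂ := ⟨hz', hz⟩
        have hmeet : (O₁ ∩ (closure O₁ ∩ O₂)).Nonempty := by
          have : (closure O₁ ∩ O₂).Nonempty := ⟨z, this⟩
          rcases this with ⟨w, hw₁, hw₂⟩
          have := mem_closure_iff.1 hw₁ (closure O₁ ∩ O₂) (hcl₁.inter hO₂o) ⟨hw₁, hw₂⟩
          rcases this with ⟨u, hu1, hu2⟩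
          exact ⟨u, hu2, hu1⟩
        rcases hmeet with ⟨u, hu1, hu2⟩
        have : u ∈ O₁ ∩ O₂ := ⟨hu1, hu2.2⟩
        rw [hO12] at this
        exact this
      have h2 : closure O₂ ⊆ (closure O₁)ᶜ :=
        closure_minimal h1 (isClosed_compl_iff.2 hcl₁)
      ext z
      simp only [Set.mem_inter_iff, Set.mem_empty_iff_false, iff_false, not_and]
      exact fun h h' => h2 h' h
    -- each cluster point puts x in the closure of Oᵢ
    have hxcl : ∀ (O : Set X) (V : Set Y) (y : Y), Subtype.val ⁻¹' O = g ⁻¹' V →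
        ClusterPt y (G x) → V ∈ 𝓝 y → x ∈ closure O := by
      intro O V y hO hcp hV
      rw [mem_closure_iff]
      intro U hUo hxU
      have := (clusterPt_iff_nonempty.1 hcp) hV (Filter.image_mem_map
        (Filter.preimage_mem_comap (hUo.mem_nhds hxU)))
      rcases this with ⟨w, hwV, a, haU, rfl⟩
      have : a ∈ Subtype.val ⁻¹' O := by rw [hO]; exact hwV
      exact ⟨a, haU, this⟩
    have hx₁ : x ∈ closure O₁ := hxcl O₁ V₁ y₁ hO₁ h₁ (hV₁o.mem_nhds hy₁)
    have hx₂ : x ∈ closure O₂ := hxcl O₂ V₂ y₂ hO₂ h₂ (hV₂o.mem_nhds hy₂)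
    have : x ∈ closure O₁ ∩ closure O₂ := ⟨hx₁, hx₂⟩
    rw [hclosed] at this
    exact this
  -- existence of limit in φ x for every x
  have hlim : ∀ x, ∃ y ∈ φ x, Filter.Tendsto g (Filter.comap ((↑) : A → X) (𝓝 x)) (𝓝 y) := by
    intro x
    haveI := hGne x
    obtain ⟨y, hyK, hycl⟩ := clusterPt_of_absorbing (hcomp x) (G x) (habs x)
    refine ⟨y, hyK, ?_⟩
    rw [Filter.tendsto_iff_comap]
    -- show G x ≤ 𝓝 y, i.e. every nbhd of y is in G x
    have : G x ≤ 𝓝 y := by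
      intro V hV
      by_contra hVG
      have hGV : ((G x) ⊓ 𝓟 Vᶜ).NeBot := by
        refine Filter.neBot_iff.2 fun h => hVG ?_
        have := Filter.inf_principal_eq_bot.1 h
        rwa [compl_compl] at this
      have habs' : ∀ U : Set Y, IsOpen U → φ x ⊆ U → U ∈ (G x) ⊓ 𝓟 Vᶜ :=
        fun U hUo hUsub => Filter.mem_inf_of_left (habs x U hUo hUsub)
      obtain ⟨z, hzK, hzcl⟩ := clusterPt_of_absorbing (hcomp x) _ habs'
      have hzG : ClusterPt z (G x) := hzcl.mono inf_le_left
      have hzy : z = y := huniq x z y hzG hycl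
      -- but V is a nbhd of z = y and Vᶜ ∈ the filter: contradiction
      have : (V ∩ Vᶜ).Nonempty :=
        (clusterPt_iff_nonempty.1 hzcl) (hzy ▸ hV) (Filter.mem_inf_of_right (Filter.mem_principal_self _))
      simpa using this
    rw [← Filter.map_le_iff_le_comap]
    exact this
  -- assemble
  have hlim' : ∀ x, ∃ y, Filter.Tendsto g (Filter.comap ((↑) : A → X) (𝓝 x)) (𝓝 y) :=
    fun x => ⟨(hlim x).choose, (hlim x).choose_spec.2⟩
  refine ⟨di.extend g, di.continuous_extend hlim', ?_, ?_⟩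
  · intro x
    have := di.extend_eq_of_tendsto (hlim x).choose_spec.2
    rw [this]
    exact (hlim x).choose_spec.1
  · intro a
    exact di.extend_eq' hlim' a
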